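/- For each n ≥ 2 let a_n, b_n > 0 be bounded sequences with p_n = a_n·log(n)/n ∈ (0,1) and q_n = b_n·log(n)/n ∈ (0,1), let the prior on Θ_n be uniform, and let θ_n ∈ Θ_n. If ((√a_n − √b_n)² − a_n b_n log(n)/(2n) − 4)·log(n) → ∞ as n → ∞, then P_{θ_n} Π({θ_n} | X^n) → 1, i.e. the posterior recovers the community assignments exactly. -/

import Mathlib

open Finset Real Filter

/-- The set of potential edges of an `n`-vertex graph: pairs `(i,j)` with `i < j`. -/
abbrev Edge (n : ℕ) := {e : Fin n × Fin n // e.1 < e.2}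

/-- An observed graph: an edge indicator for each potential edge. -/
abbrev SBMGraph (n : ℕ) := Edge n → Bool

/-- Edge probability under assignment `θ`: `p` within communities, `q` between. -/
noncomputable def edgeProb {n : ℕ} (p q : ℝ) (θ : Fin n → Bool) (e : Edge n) : ℝ :=
  if θ e.val.1 = θ e.val.2 then p else q

/-- Probability mass function of the observed graph under `θ`. -/
noncomputable def graphPMF {n : ℕ} (p q : ℝ) (θ : Fin n → Bool) (x : SBMGraph n) : ℝ :=
  ∏ e : Edge n, if x e then edgeProb p q θ e else 1 - edgeProb p q θ e

/-- Hellinger affinity of Bernoulli parameters. -/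
noncomputable def rho (p q : ℝ) : ℝ := Real.sqrt (p * q) + Real.sqrt ((1 - p) * (1 - q))

/-- Edges whose probability changes from `p` to `q` when replacing `θ` by `η`. -/
def D1 {n : ℕ} (θ η : Fin n → Bool) : Finset (Fin n × Fin n) :=
  Finset.univ.filter fun e => e.1 < e.2 ∧ θ e.1 = θ e.2 ∧ η e.1 ≠ η e.2

/-- Edges whose probability changes from `q` to `p` when replacing `θ` by `η`. -/
def D2 {n : ℕ} (θ η : Fin n → Bool) : Finset (Fin n × Fin n) :=
  Finset.univ.filter fun e => e.1 < e.2 ∧ θ e.1 ≠ θ e.2 ∧ η e.1 = η e.2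

/-- Hamming distance. -/
def hdist {n : ℕ} (θ η : Fin n → Bool) : ℕ := (Finset.univ.filter fun i => θ i ≠ η i).card

/-- The metric `k(θ,η) = h(θ,η) ∧ (n - h(θ,η))`. -/
def kdist {n : ℕ} (θ η : Fin n → Bool) : ℕ := min (hdist θ η) (n - hdist θ η)

/-- Size of the smallest community. -/
def countOnes {n : ℕ} (θ : Fin n → Bool) : ℕ := (Finset.univ.filter fun i => θ i = true).card

/-- The parameter space `Θ_n`. -/
def Theta (n : ℕ) : Finset (Fin n → Bool) :=
  Finset.univ.filter fun θ => 2 * countOnes θ ≤ n ∧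
    ∀ i : Fin n, 2 * countOnes θ = n → (i : ℕ) = 0 → θ i = false

/-- Posterior mass of `A ⊆ Θ_n` given data `x`, under prior mass function `π`. -/
noncomputable def postMass {n : ℕ} (p q : ℝ) (pri : (Fin n → Bool) → ℝ)
    (A : Finset (Fin n → Bool)) (x : SBMGraph n) : ℝ :=
  (∑ η ∈ A, pri η * graphPMF p q η x) / (∑ η ∈ Theta n, pri η * graphPMF p q η x)

/-- `P_θ`-expectation of the posterior mass of `A`. -/
noncomputable def expPostMass {n : ℕ} (p q : ℝ) (pri : (Fin n → Bool) → ℝ)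
    (θ : Fin n → Bool) (A : Finset (Fin n → Bool)) : ℝ :=
  ∑ x : SBMGraph n, graphPMF p q θ x * postMass p q pri A x

/-- The uniform prior on `Θ_n`. -/
noncomputable def unifPrior (n : ℕ) : (Fin n → Bool) → ℝ := fun _ => ((2:ℝ) ^ (n - 1))⁻¹

/-- Hamming ball `B_n(θ,k)` inside `Θ_n`. -/
def hball {n : ℕ} (θ : Fin n → Bool) (k : ℕ) : Finset (Fin n → Bool) :=
  (Theta n).filter fun η => kdist η θ ≤ k


section AuxSBM

lemma sqrt_prod' {α : Type*} (s : Finset α) (f : α → ℝ) (h : ∀ i ∈ s, 0 ≤ f i) :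
    Real.sqrt (∏ i ∈ s, f i) = ∏ i ∈ s, Real.sqrt (f i) := by
  induction s using Finset.cons_induction with
  | empty => simp
  | cons a s ha ih =>
      rw [Finset.prod_cons, Finset.prod_cons, Real.sqrt_mul (h a (Finset.mem_cons_self a s)),
        ih fun i hi => h i (Finset.mem_cons_of_mem hi)]

lemma sum_graph_prod {n : ℕ} (F : Edge n → Bool → ℝ) :
    ∑ x : SBMGraph n, ∏ e : Edge n, F e (x e) = ∏ e : Edge n, (F e true + F e false) := by
  rw [← Fintype.piFinset_univ, ← Finset.prod_univ_sum]
  exact Finset.prod_congr rfl fun e _ => by rw [Fintype.sum_bool]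

section PMF
variable {n : ℕ} {p q : ℝ}

lemma edgeProb_mem (hp : p ∈ Set.Ioo (0:ℝ) 1) (hq : q ∈ Set.Ioo (0:ℝ) 1)
    (θ : Fin n → Bool) (e : Edge n) : edgeProb p q θ e ∈ Set.Ioo (0:ℝ) 1 := by
  unfold edgeProb; split <;> assumption

lemma graphPMF_pos (hp : p ∈ Set.Ioo (0:ℝ) 1) (hq : q ∈ Set.Ioo (0:ℝ) 1)
    (θ : Fin n → Bool) (x : SBMGraph n) : 0 < graphPMF p q θ x := by
  apply Finset.prod_pos
  intro e _
  obtain ⟨h1, h2⟩ := edgeProb_mem hp hq θ e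
  split <;> linarith

lemma graphPMF_sum_one (hp : p ∈ Set.Ioo (0:ℝ) 1) (hq : q ∈ Set.Ioo (0:ℝ) 1)
    (θ : Fin n → Bool) : ∑ x : SBMGraph n, graphPMF p q θ x = 1 := by
  unfold graphPMF
  rw [sum_graph_prod (fun e b => if b then edgeProb p q θ e else 1 - edgeProb p q θ e)]
  rw [← Finset.prod_const_one (s := (univ : Finset (Edge n)))]
  apply Finset.prod_congr rfl
  intro e _
  simp

/-- the set of edges whose status changes between `θ` and `η` -/
def changed (n : ℕ) (θ η : Fin n → Bool) : Finset (Edge n) :=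
  Finset.univ.filter fun e : Edge n => ¬(θ e.val.1 = θ e.val.2 ↔ η e.val.1 = η e.val.2)

lemma rho_self {r : ℝ} (h0 : 0 ≤ r) (h1 : r ≤ 1) : rho r r = 1 := by
  unfold rho
  rw [Real.sqrt_mul_self h0, Real.sqrt_mul_self (by linarith)]
  ring

lemma rho_comm (p q : ℝ) : rho p q = rho q p := by
  unfold rho; rw [mul_comm, mul_comm (1-p)]

lemma rho_nonneg (p q : ℝ) : 0 ≤ rho p q :=
  add_nonneg (Real.sqrt_nonneg _) (Real.sqrt_nonneg _)

lemma affinity (hp : p ∈ Set.Ioo (0:ℝ) 1) (hq : q ∈ Set.Ioo (0:ℝ) 1)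
    (θ η : Fin n → Bool) :
    ∑ x : SBMGraph n, Real.sqrt (graphPMF p q θ x * graphPMF p q η x)
      = rho p q ^ (changed n θ η).card := by
  have key : ∀ x : SBMGraph n, Real.sqrt (graphPMF p q θ x * graphPMF p q η x)
      = ∏ e : Edge n, Real.sqrt ((if x e then edgeProb p q θ e else 1 - edgeProb p q θ e)
          * (if x e then edgeProb p q η e else 1 - edgeProb p q η e)) := by
    intro x
    unfold graphPMF
    rw [← Finset.prod_mul_distrib]
    apply sqrt_prod'
    intro e _
    obtain ⟨h1, h2⟩ := edgeProb_mem hp hq θ e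
    obtain ⟨h3, h4⟩ := edgeProb_mem hp hq η e
    split <;> nlinarith
  simp_rw [key]
  rw [sum_graph_prod (fun e b => Real.sqrt ((if b then edgeProb p q θ e else 1 - edgeProb p q θ e)
          * (if b then edgeProb p q η e else 1 - edgeProb p q η e)))]
  have per_edge : ∀ e : Edge n,
      (Real.sqrt (edgeProb p q θ e * edgeProb p q η e)
        + Real.sqrt ((1 - edgeProb p q θ e) * (1 - edgeProb p q η e)))
      = if θ e.val.1 = θ e.val.2 ↔ η e.val.1 = η e.val.2 then 1 else rho p q := by
    intro e
    unfold edgeProb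
    obtain ⟨hp1, hp2⟩ := hp
    obtain ⟨hq1, hq2⟩ := hq
    by_cases h1 : θ e.val.1 = θ e.val.2 <;> by_cases h2 : η e.val.1 = η e.val.2
    · rw [if_pos h1, if_pos h2, if_pos (by tauto)]
      have := rho_self hp1.le hp2.le; unfold rho at this; linarith
    · rw [if_pos h1, if_neg h2, if_neg (by tauto)]; rfl
    · rw [if_neg h1, if_pos h2, if_neg (by tauto), rho_comm]; rfl
    · rw [if_neg h1, if_neg h2, if_pos (by tauto)]
      have := rho_self hq1.le hq2.le; unfold rho at this; linarith
  calc ∏ e : Edge n, (Real.sqrt ((if true then edgeProb p q θ e else 1 - edgeProb p q θ e)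
          * (if true then edgeProb p q η e else 1 - edgeProb p q η e))
        + Real.sqrt ((if false then edgeProb p q θ e else 1 - edgeProb p q θ e)
          * (if false then edgeProb p q η e else 1 - edgeProb p q η e)))
      = ∏ e : Edge n, if θ e.val.1 = θ e.val.2 ↔ η e.val.1 = η e.val.2 then 1 else rho p q := by
        apply Finset.prod_congr rfl
        intro e _
        simp only [if_true, if_false]
        exact per_edge e
    _ = rho p q ^ (changed n θ η).card := by
        rw [Finset.prod_ite, Finset.prod_const, Finset.prod_const]
        simp [changed]

end PMF

lemma bool_iff_aux : ∀ a b c d : Bool, (¬(a = b ↔ c = d)) ↔ ¬((a = c) ↔ (b = d)) := by decide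

lemma card_changed {n : ℕ} (θ η : Fin n → Bool) :
    (changed n θ η).card = hdist θ η * (n - hdist θ η) := by
  classical
  set S : Finset (Fin n) := univ.filter (fun i => ¬(θ i = η i)) with hS
  have hScard : S.card = hdist θ η := by simp [hS, hdist, Ne]
  set U : Finset (Fin n × Fin n) :=
    univ.filter (fun e => ¬((θ e.1 = η e.1) ↔ (θ e.2 = η e.2))) with hU
  have hUeq : U = S ×ˢ Sᶜ ∪ Sᶜ ×ˢ S := by
    ext e
    simp only [hU, hS, Finset.mem_filter, Finset.mem_univ, true_and, Finset.mem_union,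
      Finset.mem_product, Finset.mem_compl, Finset.mem_filter, not_not]
    tauto
  have hdisj : Disjoint (S ×ˢ Sᶜ) (Sᶜ ×ˢ S) := by
    rw [Finset.disjoint_left]
    intro e he1 he2
    rw [Finset.mem_product] at he1 he2
    exact (Finset.mem_compl.mp he2.1) he1.1
  have hUcard : U.card = S.card * Sᶜ.card + Sᶜ.card * S.card := by
    rw [hUeq, Finset.card_union_of_disjoint hdisj, Finset.card_product, Finset.card_product]
  set A : Finset (Fin n × Fin n) := U.filter (fun e => e.1 < e.2) with hA
  set B : Finset (Fin n × Fin n) := U.filter (fun e => e.2 < e.1) with hB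
  have hUswap : ∀ e : Fin n × Fin n, e ∈ U → e.swap ∈ U := by
    intro e he
    simp only [hU, Finset.mem_filter, Finset.mem_univ, true_and, Prod.swap] at he ⊢
    tauto
  have hAB : A.card = B.card := by
    apply Finset.card_bij' (fun e _ => e.swap) (fun e _ => e.swap)
    · intro e _; exact Prod.swap_swap e
    · intro e _; exact Prod.swap_swap e
    · intro e he
      rw [hA, Finset.mem_filter] at he
      rw [hB, Finset.mem_filter]
      exact ⟨hUswap e he.1, he.2⟩
    · intro e he
      rw [hB, Finset.mem_filter] at he
      rw [hA, Finset.mem_filter]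
      exact ⟨hUswap e he.1, he.2⟩
  have hBeq : B = U.filter (fun e => ¬ e.1 < e.2) := by
    ext e
    simp only [hB, Finset.mem_filter, and_congr_right_iff]
    intro heU
    have hne : e.1 ≠ e.2 := by
      simp only [hU, Finset.mem_filter, Finset.mem_univ, true_and] at heU
      intro h; rw [h] at heU; tauto
    constructor
    · intro h; exact not_lt.mpr h.le
    · intro h; exact lt_of_le_of_ne (not_lt.mp h) (Ne.symm hne)
  have hsplit : A.card + B.card = U.card := by
    rw [hA, hBeq]
    exact Finset.card_filter_add_card_filter_not (s := U) (p := fun e => e.1 < e.2)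
  have hcardA : (changed n θ η).card = A.card := by
    apply Finset.card_bij (fun (e : Edge n) _ => e.val)
    · intro e he
      simp only [changed, Finset.mem_filter, Finset.mem_univ, true_and] at he
      simp only [hA, hU, Finset.mem_filter, Finset.mem_univ, true_and]
      exact ⟨(bool_iff_aux _ _ _ _).mp he, e.property⟩
    · intro e1 _ e2 _ h
      exact Subtype.ext h
    · intro e he
      simp only [hA, hU, Finset.mem_filter, Finset.mem_univ, true_and] at he
      refine ⟨⟨e, he.2⟩, ?_, rfl⟩
      simp only [changed, Finset.mem_filter, Finset.mem_univ, true_and]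
      exact (bool_iff_aux _ _ _ _).mpr he.1
  have hcompl : Sᶜ.card = n - S.card := by
    rw [Finset.card_compl]
    simp
  rw [Nat.mul_comm Sᶜ.card S.card] at hUcard
  rw [hcardA, show A.card = S.card * Sᶜ.card by omega, hcompl, hScard]

lemma affinity' {n : ℕ} {p q : ℝ} (hp : p ∈ Set.Ioo (0:ℝ) 1) (hq : q ∈ Set.Ioo (0:ℝ) 1)
    (θ η : Fin n → Bool) :
    ∑ x : SBMGraph n, Real.sqrt (graphPMF p q θ x * graphPMF p q η x)
      = rho p q ^ (hdist θ η * (n - hdist θ η)) := by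
  rw [affinity hp hq θ η, card_changed]

section Post
variable {n : ℕ} {p q : ℝ} {θ : Fin n → Bool}

lemma theta_mem_false (hn : 1 ≤ n) : (fun _ => false) ∈ Theta n := by
  simp only [Theta, Finset.mem_filter, Finset.mem_univ, true_and, countOnes]
  refine Finset.mem_filter.mpr ⟨Finset.mem_univ _, ?_, ?_⟩
  · simp
  · intro i h hi
    trivial

lemma sum_theta_pos (hp : p ∈ Set.Ioo (0:ℝ) 1) (hq : q ∈ Set.Ioo (0:ℝ) 1) (hn : 1 ≤ n)
    (x : SBMGraph n) : 0 < ∑ η ∈ Theta n, graphPMF p q η x :=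
  Finset.sum_pos (fun η _ => graphPMF_pos hp hq η x) ⟨_, theta_mem_false hn⟩

lemma expPost_identity (hn : 2 ≤ n) (hp : p ∈ Set.Ioo (0:ℝ) 1) (hq : q ∈ Set.Ioo (0:ℝ) 1)
    (hθ : θ ∈ Theta n) :
    expPostMass p q (unifPrior n) θ {θ}
      = 1 - ∑ x : SBMGraph n, graphPMF p q θ x *
          ((∑ η ∈ (Theta n).erase θ, graphPMF p q η x) / (∑ η ∈ Theta n, graphPMF p q η x)) := by
  unfold expPostMass postMass unifPrior
  have hc : (0:ℝ) < ((2:ℝ) ^ (n-1))⁻¹ := by positivity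
  have key : ∀ x : SBMGraph n,
      (∑ η ∈ ({θ} : Finset (Fin n → Bool)), ((2:ℝ)^(n-1))⁻¹ * graphPMF p q η x)
        / (∑ η ∈ Theta n, ((2:ℝ)^(n-1))⁻¹ * graphPMF p q η x)
      = 1 - (∑ η ∈ (Theta n).erase θ, graphPMF p q η x) / (∑ η ∈ Theta n, graphPMF p q η x) := by
    intro x
    have hS : (0:ℝ) < ∑ η ∈ Theta n, graphPMF p q η x := sum_theta_pos hp hq (by omega) x
    rw [Finset.sum_singleton, ← Finset.mul_sum, mul_div_mul_left _ _ (ne_of_gt hc)]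
    have hadd : graphPMF p q θ x + ∑ η ∈ (Theta n).erase θ, graphPMF p q η x
        = ∑ η ∈ Theta n, graphPMF p q η x :=
      Finset.add_sum_erase _ (fun η => graphPMF p q η x) hθ
    rw [eq_sub_iff_add_eq, ← add_div, hadd, div_self (ne_of_gt hS)]
  simp_rw [key, mul_sub, mul_one, Finset.sum_sub_distrib, graphPMF_sum_one hp hq θ]

lemma remainder_nonneg (hp : p ∈ Set.Ioo (0:ℝ) 1) (hq : q ∈ Set.Ioo (0:ℝ) 1) (hn : 1 ≤ n) :
    0 ≤ ∑ x : SBMGraph n, graphPMF p q θ x *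
          ((∑ η ∈ (Theta n).erase θ, graphPMF p q η x) / (∑ η ∈ Theta n, graphPMF p q η x)) := by
  apply Finset.sum_nonneg
  intro x _
  have hS := sum_theta_pos hp hq hn x
  have h1 : (0:ℝ) ≤ ∑ η ∈ (Theta n).erase θ, graphPMF p q η x :=
    Finset.sum_nonneg fun η _ => (graphPMF_pos hp hq η x).le
  exact mul_nonneg (graphPMF_pos hp hq θ x).le (div_nonneg h1 hS.le)

lemma div_mul_le_sqrt {a b s : ℝ} (ha : 0 < a) (hb : 0 < b) (hs : a + b ≤ s) :
    a * (b / s) ≤ Real.sqrt (a * b) := by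
  have hs0 : 0 < s := by linarith
  have ht : Real.sqrt (a * b) ^ 2 = a * b := Real.sq_sqrt (by positivity)
  have ht0 : 0 ≤ Real.sqrt (a * b) := Real.sqrt_nonneg _
  rw [mul_div_assoc'] at *
  rw [div_le_iff₀ hs0]
  nlinarith [sq_nonneg (a + b - Real.sqrt (a * b)), sq_nonneg (a - b),
    mul_nonneg ht0 (by linarith : (0:ℝ) ≤ s - (a + b))]

lemma remainder_le (hn : 2 ≤ n) (hp : p ∈ Set.Ioo (0:ℝ) 1) (hq : q ∈ Set.Ioo (0:ℝ) 1)
    (hθ : θ ∈ Theta n) :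
    ∑ x : SBMGraph n, graphPMF p q θ x *
        ((∑ η ∈ (Theta n).erase θ, graphPMF p q η x) / (∑ η ∈ Theta n, graphPMF p q η x))
      ≤ ∑ η ∈ (Theta n).erase θ, rho p q ^ (hdist θ η * (n - hdist θ η)) := by
  have step1 : ∑ x : SBMGraph n, graphPMF p q θ x *
        ((∑ η ∈ (Theta n).erase θ, graphPMF p q η x) / (∑ η ∈ Theta n, graphPMF p q η x))
      = ∑ η ∈ (Theta n).erase θ, ∑ x : SBMGraph n,
          graphPMF p q θ x * (graphPMF p q η x / (∑ η' ∈ Theta n, graphPMF p q η' x)) := by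
    rw [Finset.sum_comm]
    apply Finset.sum_congr rfl
    intro x _
    rw [Finset.sum_div, Finset.mul_sum]
  rw [step1]
  apply Finset.sum_le_sum
  intro η hη
  rw [← affinity' hp hq θ η]
  apply Finset.sum_le_sum
  intro x _
  have hθη : θ ≠ η := fun h => (Finset.mem_erase.mp hη).1 h.symm
  have hpair : ({θ, η} : Finset (Fin n → Bool)) ⊆ Theta n := by
    intro z hz
    rcases Finset.mem_insert.mp hz with h | h
    · exact h ▸ hθ
    · exact (Finset.mem_singleton.mp h) ▸ (Finset.mem_erase.mp hη).2
  have hsum : graphPMF p q θ x + graphPMF p q η x ≤ ∑ η' ∈ Theta n, graphPMF p q η' x := by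
    have hps : ∑ z ∈ ({θ, η} : Finset (Fin n → Bool)), graphPMF p q z x
        = graphPMF p q θ x + graphPMF p q η x := Finset.sum_pair hθη
    rw [← hps]
    exact Finset.sum_le_sum_of_subset_of_nonneg hpair
      fun z _ _ => (graphPMF_pos hp hq z x).le
  exact div_mul_le_sqrt (graphPMF_pos hp hq θ x) (graphPMF_pos hp hq η x) hsum

end Post

section Count
variable {n : ℕ} {θ η : Fin n → Bool}

lemma bool_flip_aux : ∀ t x : Bool, t ≠ x → x = !t := by decide
lemma bool_inj_aux : ∀ t x y : Bool, ((¬t = x) ↔ (¬t = y)) → x = y := by decide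

lemma hdist_bounds (hn : 2 ≤ n) (hθ : θ ∈ Theta n) (hη : η ∈ Theta n) (hne : η ≠ θ) :
    1 ≤ hdist θ η ∧ hdist θ η ≤ n - 1 := by
  have hle : hdist θ η ≤ n := by
    have := Finset.card_le_univ (Finset.univ.filter fun i => θ i ≠ η i)
    simpa [hdist] using this
  constructor
  · by_contra hcon
    push_neg at hcon
    interval_cases h : hdist θ η
    have hemp : (Finset.univ.filter fun i => θ i ≠ η i) = ∅ := Finset.card_eq_zero.mp h
    apply hne
    funext i
    by_contra hi
    have : i ∈ (Finset.univ.filter fun i => θ i ≠ η i) := by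
      simp only [Finset.mem_filter, Finset.mem_univ, true_and]
      exact fun hc => hi hc.symm
    rw [hemp] at this
    exact absurd this (Finset.notMem_empty i)
  · rcases Nat.lt_or_ge (hdist θ η) n with hlt | hge
    · omega
    · exfalso
      have hcard : (Finset.univ.filter fun i => θ i ≠ η i).card = n := by
        have : hdist θ η = n := le_antisymm hle hge
        exact this
      have huniv : (Finset.univ.filter fun i => θ i ≠ η i) = Finset.univ := by
        apply Finset.eq_univ_of_card
        simpa using hcard
      have hflip : ∀ i, η i = !θ i := by
        intro i
        have hi : i ∈ (Finset.univ.filter fun i => θ i ≠ η i) := by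
          rw [huniv]; exact Finset.mem_univ i
        simp only [Finset.mem_filter, Finset.mem_univ, true_and] at hi
        exact bool_flip_aux _ _ hi
      have hcount : countOnes η = n - countOnes θ := by
        unfold countOnes
        have : (Finset.univ.filter fun i => η i = true)
            = (Finset.univ.filter fun i => θ i = true)ᶜ := by
          rw [Finset.compl_filter]
          apply Finset.filter_congr
          intro i _
          rw [hflip i]
          cases θ i <;> simp
        rw [this, Finset.card_compl]
        simp
      simp only [Theta, Finset.mem_filter, Finset.mem_univ, true_and] at hθ hη
      obtain ⟨hθ1, hθ2⟩ := hθ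
      obtain ⟨hη1, hη2⟩ := hη
      have h2 : 2 * countOnes θ = n := by omega
      have h2' : 2 * countOnes η = n := by omega
      have e1 : θ ⟨0, by omega⟩ = false := hθ2 ⟨0, by omega⟩ h2 rfl
      have e2 : η ⟨0, by omega⟩ = false := hη2 ⟨0, by omega⟩ h2' rfl
      rw [hflip ⟨0, by omega⟩, e1] at e2
      simp at e2

lemma card_hdist_le (θ : Fin n → Bool) (h : ℕ) :
    (((Theta n).erase θ).filter fun η => hdist θ η = h).card ≤ n.choose h := by
  classical
  trans ((Finset.univ : Finset (Fin n → Bool)).filter fun η => hdist θ η = h).card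
  · apply Finset.card_le_card
    intro η hη
    simp only [Finset.mem_filter, Finset.mem_univ, true_and]
    exact (Finset.mem_filter.mp hη).2
  · have hpc : (Finset.powersetCard h (Finset.univ : Finset (Fin n))).card = n.choose h := by
      rw [Finset.card_powersetCard]
      simp
    rw [← hpc]
    apply Finset.card_le_card_of_injOn (fun η => Finset.univ.filter fun i => θ i ≠ η i)
    · intro η hη
      rw [Finset.mem_coe, Finset.mem_powersetCard]
      refine ⟨Finset.subset_univ _, ?_⟩
      exact (Finset.mem_filter.mp hη).2
    · intro η1 h1 η2 h2 heq
      funext i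
      have := Finset.ext_iff.mp heq i
      simp only [Finset.mem_filter, Finset.mem_univ, true_and] at this
      exact bool_inj_aux (θ i) _ _ this

lemma per_h_bound {r : ℝ} (hn : 2 ≤ n) (hr0 : 0 ≤ r) (hr1 : r ≤ 1) {h : ℕ}
    (hh1 : 1 ≤ h) (hh2 : h ≤ n - 1) :
    (n.choose h : ℝ) * r ^ (h * (n - h))
      ≤ ((n:ℝ) * r ^ ((n+1)/2)) ^ h + ((n:ℝ) * r ^ ((n+1)/2)) ^ (n - h) := by
  have hεpos : 0 ≤ (n:ℝ) * r ^ ((n+1)/2) := by positivity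
  have key : ∀ k : ℕ, n.choose h = n.choose k → k * ((n+1)/2) ≤ h * (n - h) →
      (n.choose h : ℝ) * r ^ (h * (n - h)) ≤ ((n:ℝ) * r ^ ((n+1)/2)) ^ k := by
    intro k hck hex
    have hc : (n.choose h : ℝ) ≤ (n:ℝ) ^ k := by
      rw [hck]
      calc (n.choose k : ℝ) ≤ ((n ^ k : ℕ) : ℝ) := by exact_mod_cast Nat.choose_le_pow n k
        _ = (n:ℝ) ^ k := by push_cast; rfl
    have hrp : r ^ (h * (n - h)) ≤ r ^ (k * ((n+1)/2)) := pow_le_pow_of_le_one hr0 hr1 hex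
    calc (n.choose h : ℝ) * r ^ (h * (n - h)) ≤ (n:ℝ) ^ k * r ^ (k * ((n+1)/2)) :=
          mul_le_mul hc hrp (by positivity) (by positivity)
      _ = ((n:ℝ) * r ^ ((n+1)/2)) ^ k := by rw [mul_pow, ← pow_mul']
  rcases le_total h (n - h) with hc | hc
  · have h1 := key h rfl (by
      have : (n+1)/2 ≤ n - h := by omega
      exact Nat.mul_le_mul_left h this)
    exact le_trans h1 (le_add_of_nonneg_right (pow_nonneg hεpos _))
  · have h1 := key (n - h) (by rw [Nat.choose_symm (by omega : h ≤ n)]) (by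
      have : (n+1)/2 ≤ h := by omega
      calc (n - h) * ((n+1)/2) ≤ (n - h) * h := Nat.mul_le_mul_left _ this
        _ = h * (n - h) := Nat.mul_comm _ _)
    exact le_trans h1 (le_add_of_nonneg_left (pow_nonneg hεpos _))

lemma sum_eps_pow {ε : ℝ} (hε0 : 0 ≤ ε) (hε : ε ≤ 1/2) (m : ℕ) :
    ∑ h ∈ Finset.Icc 1 m, ε ^ h ≤ 2 * ε := by
  have hbd : ∀ h ∈ Finset.Icc 1 m, ε ^ h ≤ ε * (1/2:ℝ)^(h-1) := by
    intro h hh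
    rw [Finset.mem_Icc] at hh
    have he : ε ^ h = ε * ε ^ (h-1) := by
      rw [← pow_succ']
      congr 1
      omega
    rw [he]
    exact mul_le_mul_of_nonneg_left (pow_le_pow_left₀ hε0 hε _) hε0
  calc ∑ h ∈ Finset.Icc 1 m, ε ^ h ≤ ∑ h ∈ Finset.Icc 1 m, ε * (1/2:ℝ)^(h-1) :=
        Finset.sum_le_sum hbd
    _ = ε * ∑ h ∈ Finset.Icc 1 m, (1/2:ℝ)^(h-1) := by rw [Finset.mul_sum]
    _ ≤ ε * 2 := by
        apply mul_le_mul_of_nonneg_left _ hε0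
        have key : ∀ m : ℕ, ∑ h ∈ Finset.Icc 1 m, (1/2:ℝ)^(h-1) = 2 - 2 * (1/2:ℝ)^m := by
          intro m
          induction m with
          | zero => simp
          | succ m ih =>
              rw [Finset.sum_Icc_succ_top (by omega), ih]
              have : ((m+1) - 1 : ℕ) = m := by omega
              rw [this]
              ring
        rw [key m]
        have : (0:ℝ) ≤ (1/2:ℝ)^m := by positivity
        linarith
    _ = 2 * ε := mul_comm _ _

lemma sum_flip {ε : ℝ} (hn : 2 ≤ n) :
    ∑ h ∈ Finset.Icc 1 (n-1), ε ^ (n - h) = ∑ h ∈ Finset.Icc 1 (n-1), ε ^ h := by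
  apply Finset.sum_nbij' (i := fun h => n - h) (j := fun h => n - h) <;>
    intros a ha <;> simp_all [Finset.mem_Icc] <;> omega

lemma counting_bound {r : ℝ} (hn : 2 ≤ n)
    (hr0 : 0 ≤ r) (hr1 : r ≤ 1) (hθ : θ ∈ Theta n)
    (hε : (n:ℝ) * r ^ ((n+1)/2) ≤ 1/2) :
    ∑ η ∈ (Theta n).erase θ, r ^ (hdist θ η * (n - hdist θ η))
      ≤ 4 * ((n:ℝ) * r ^ ((n+1)/2)) := by
  set ε := (n:ℝ) * r ^ ((n+1)/2) with hεdef
  have hε0 : 0 ≤ ε := by positivity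
  have step1 : ∑ η ∈ (Theta n).erase θ, r ^ (hdist θ η * (n - hdist θ η))
      ≤ ∑ h ∈ Finset.Icc 1 (n-1), (n.choose h : ℝ) * r ^ (h * (n - h)) := by
    have hmaps : ∀ η ∈ (Theta n).erase θ, hdist θ η ∈ Finset.Icc 1 (n-1) := by
      intro η hη
      rw [Finset.mem_Icc]
      obtain ⟨hne, hηΘ⟩ := Finset.mem_erase.mp hη
      exact hdist_bounds hn hθ hηΘ hne
    rw [← Finset.sum_fiberwise_of_maps_to hmaps (fun η => r ^ (hdist θ η * (n - hdist θ η)))]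
    apply Finset.sum_le_sum
    intro h hh
    rw [Finset.mem_Icc] at hh
    have hconst : ∀ η ∈ ((Theta n).erase θ).filter (fun η => hdist θ η = h),
        r ^ (hdist θ η * (n - hdist θ η)) = r ^ (h * (n - h)) := by
      intro η hη
      rw [(Finset.mem_filter.mp hη).2]
    rw [Finset.sum_congr rfl hconst, Finset.sum_const, nsmul_eq_mul]
    apply mul_le_mul_of_nonneg_right _ (pow_nonneg hr0 _)
    exact_mod_cast card_hdist_le θ h
  have step2 : ∑ h ∈ Finset.Icc 1 (n-1), (n.choose h : ℝ) * r ^ (h * (n - h))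
      ≤ ∑ h ∈ Finset.Icc 1 (n-1), (ε ^ h + ε ^ (n - h)) := by
    apply Finset.sum_le_sum
    intro h hh
    rw [Finset.mem_Icc] at hh
    exact per_h_bound hn hr0 hr1 hh.1 hh.2
  have step3 : ∑ h ∈ Finset.Icc 1 (n-1), (ε ^ h + ε ^ (n - h))
      = 2 * ∑ h ∈ Finset.Icc 1 (n-1), ε ^ h := by
    rw [Finset.sum_add_distrib, sum_flip hn]
    ring
  calc ∑ η ∈ (Theta n).erase θ, r ^ (hdist θ η * (n - hdist θ η))
      ≤ ∑ h ∈ Finset.Icc 1 (n-1), (n.choose h : ℝ) * r ^ (h * (n - h)) := step1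
    _ ≤ ∑ h ∈ Finset.Icc 1 (n-1), (ε ^ h + ε ^ (n - h)) := step2
    _ = 2 * ∑ h ∈ Finset.Icc 1 (n-1), ε ^ h := step3
    _ ≤ 2 * (2 * ε) := by
        apply mul_le_mul_of_nonneg_left _ (by norm_num : (0:ℝ) ≤ 2)
        exact sum_eps_pow hε0 hε _
    _ = 4 * ε := by ring

end Count

lemma sqrt_le_half_sum {x y : ℝ} (hx : 0 ≤ x) (hy : 0 ≤ y) :
    Real.sqrt (x * y) ≤ (x + y) / 2 := by
  rw [show (x+y)/2 = Real.sqrt (((x+y)/2)^2) from (Real.sqrt_sq (by positivity)).symm]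
  apply Real.sqrt_le_sqrt
  nlinarith [sq_nonneg (x - y)]

lemma rho_le_one {p q : ℝ} (hp : p ∈ Set.Ioo (0:ℝ) 1) (hq : q ∈ Set.Ioo (0:ℝ) 1) :
    rho p q ≤ 1 := by
  unfold rho
  have h1 := sqrt_le_half_sum hp.1.le hq.1.le
  have h2 := sqrt_le_half_sum (by linarith [hp.2] : (0:ℝ) ≤ 1 - p)
    (by linarith [hq.2] : (0:ℝ) ≤ 1 - q)
  linarith

lemma rho_upper {p q : ℝ} (hp : p ∈ Set.Ioo (0:ℝ) 1) (hq : q ∈ Set.Ioo (0:ℝ) 1) :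
    rho p q ≤ 1 - (Real.sqrt p - Real.sqrt q)^2 / 2 + p * q / 2 := by
  unfold rho
  have hsq : Real.sqrt ((1-p)*(1-q)) ≤ 1 - (p+q)/2 + p*q/2 := by
    rw [show 1 - (p+q)/2 + p*q/2 = Real.sqrt ((1 - (p+q)/2 + p*q/2)^2) from
      (Real.sqrt_sq (by nlinarith [hp.1, hp.2, hq.1, hq.2])).symm]
    apply Real.sqrt_le_sqrt
    nlinarith [sq_nonneg (p + q - p*q)]
  have hexp : (Real.sqrt p - Real.sqrt q)^2 = p + q - 2*(Real.sqrt p * Real.sqrt q) := by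
    rw [sub_sq, Real.sq_sqrt hp.1.le, Real.sq_sqrt hq.1.le]
    ring
  have hpq : Real.sqrt (p*q) = Real.sqrt p * Real.sqrt q := Real.sqrt_mul hp.1.le q
  linarith

lemma eps_le {n : ℕ} {A B : ℝ} (hn : 2 ≤ n) (hA : 0 < A) (hB : 0 < B)
    (hp : A * Real.log n / n ∈ Set.Ioo (0:ℝ) 1) (hq : B * Real.log n / n ∈ Set.Ioo (0:ℝ) 1)
    (h4 : 4 ≤ (Real.sqrt A - Real.sqrt B)^2 - A * B * Real.log n / n) :
    (n:ℝ) * rho (A * Real.log n / n) (B * Real.log n / n) ^ ((n+1)/2)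
      ≤ Real.exp (-(((Real.sqrt A - Real.sqrt B)^2 - A * B * Real.log n / n - 4)
          * Real.log n / 4)) := by
  have hn0 : (0:ℝ) < n := by positivity
  have hn1 : (1:ℝ) < n := by exact_mod_cast Nat.lt_of_lt_of_le one_lt_two hn
  have hL : 0 < Real.log n := Real.log_pos hn1
  set L := Real.log n with hLdef
  set c := L / n with hcdef
  have hc : 0 < c := by positivity
  set G := (Real.sqrt A - Real.sqrt B)^2 - A * B * L / n with hGdef
  have hABc : A * B * L / n = A * B * c := by rw [hcdef]; ring
  have hpc : A * L / n = A * c := by rw [hcdef]; ring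
  have hqc : B * L / n = B * c := by rw [hcdef]; ring
  have hrho_up : rho (A * L / n) (B * L / n) ≤ 1 - c * G / 2 := by
    have h1 := rho_upper hp hq
    have hsub : Real.sqrt (A * L / n) - Real.sqrt (B * L / n)
        = (Real.sqrt A - Real.sqrt B) * Real.sqrt c := by
      rw [hpc, hqc, Real.sqrt_mul hA.le, Real.sqrt_mul hB.le]
      ring
    have hsq : (Real.sqrt (A * L / n) - Real.sqrt (B * L / n))^2
        = (Real.sqrt A - Real.sqrt B)^2 * c := by
      rw [hsub, mul_pow, Real.sq_sqrt hc.le]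
    have hmul : (A * L / n) * (B * L / n) = A * B * c^2 := by
      rw [hpc, hqc]; ring
    rw [hsq, hmul] at h1
    have : 1 - (Real.sqrt A - Real.sqrt B)^2 * c / 2 + A * B * c^2 / 2 = 1 - c * G / 2 := by
      rw [hGdef, hABc]; ring
    linarith [this ▸ h1]
  have hG4 : 4 ≤ G := h4
  have ht0 : 0 ≤ c * G / 2 := by positivity
  have hrho0 : 0 ≤ rho (A * L / n) (B * L / n) := rho_nonneg _ _
  set K := (n+1)/2 with hKdef
  have hpow : rho (A * L / n) (B * L / n) ^ K ≤ Real.exp (-(c * G / 2)) ^ K := by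
    apply pow_le_pow_left₀ hrho0
    calc rho (A * L / n) (B * L / n) ≤ 1 - c * G / 2 := hrho_up
      _ ≤ Real.exp (-(c * G / 2)) := by linarith [Real.add_one_le_exp (-(c * G / 2))]
  have hexpK : Real.exp (-(c * G / 2)) ^ K = Real.exp (K * (-(c * G / 2))) :=
    (Real.exp_nat_mul _ K).symm
  have hKhalf : (n:ℝ) / 2 ≤ (K:ℕ) := by
    have : n ≤ 2 * K := by omega
    have h2 : (n:ℝ) ≤ 2 * (K:ℝ) := by exact_mod_cast this
    linarith
  have hfinal : L + (K:ℝ) * (-(c * G / 2)) ≤ -((G - 4) * L / 4) := by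
    have h1 : (K:ℝ) * (c * G / 2) ≥ ((n:ℝ)/2) * (c * G / 2) :=
      mul_le_mul_of_nonneg_right hKhalf ht0
    have h2 : ((n:ℝ)/2) * (c * G / 2) = L * G / 4 := by
      rw [hcdef]
      field_simp
      ring
    nlinarith
  calc (n:ℝ) * rho (A * L / n) (B * L / n) ^ K
      ≤ (n:ℝ) * Real.exp (K * (-(c * G / 2))) := by
        rw [← hexpK]
        exact mul_le_mul_of_nonneg_left hpow hn0.le
    _ = Real.exp (L + (K:ℝ) * (-(c * G / 2))) := by
        rw [Real.exp_add, hLdef, Real.exp_log hn0]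
    _ ≤ Real.exp (-((G - 4) * L / 4)) := Real.exp_le_exp.mpr hfinal

lemma master {n : ℕ} {p q : ℝ} {θ : Fin n → Bool} (hn : 2 ≤ n)
    (hp : p ∈ Set.Ioo (0:ℝ) 1) (hq : q ∈ Set.Ioo (0:ℝ) 1) (hθ : θ ∈ Theta n)
    (hε : (n:ℝ) * rho p q ^ ((n+1)/2) ≤ 1/2) :
    1 - 4 * ((n:ℝ) * rho p q ^ ((n+1)/2)) ≤ expPostMass p q (unifPrior n) θ {θ}
      ∧ expPostMass p q (unifPrior n) θ {θ} ≤ 1 := by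
  have hid := expPost_identity hn hp hq hθ
  have hR0 := remainder_nonneg hp hq (by omega) (θ := θ)
  have hR := (remainder_le hn hp hq hθ).trans
    (counting_bound hn (rho_nonneg p q) (rho_le_one hp hq) hθ hε)
  constructor
  · linarith
  · linarith

end AuxSBM

/-- in the Chernoff–Hellinger phase, if
`((√a_n − √b_n)² − a_n b_n log n/(2n) − 4) log n → ∞` then the posterior recovers
the community assignments exactly. -/
theorem stmt9 (a b : ℕ → ℝ) (ha0 : ∀ n, 2 ≤ n → 0 < a n) (hb0 : ∀ n, 2 ≤ n → 0 < b n)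
    (haB : ∃ C : ℝ, ∀ n, a n ≤ C) (hbB : ∃ C : ℝ, ∀ n, b n ≤ C)
    (hp : ∀ n, 2 ≤ n → a n * Real.log n / n ∈ Set.Ioo (0:ℝ) 1)
    (hq : ∀ n, 2 ≤ n → b n * Real.log n / n ∈ Set.Ioo (0:ℝ) 1)
    (θ : (n : ℕ) → Fin n → Bool) (hθ : ∀ n, 2 ≤ n → θ n ∈ Theta n)
    (hcond : Filter.Tendsto
      (fun n : ℕ => ((Real.sqrt (a n) - Real.sqrt (b n))^2
        - a n * b n * Real.log n / (2 * n) - 4) * Real.log n)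
      Filter.atTop Filter.atTop) :
    Filter.Tendsto (fun n : ℕ =>
        expPostMass (a n * Real.log n / n) (b n * Real.log n / n)
          (unifPrior n) (θ n) {θ n})
      Filter.atTop (nhds 1) := by
  obtain ⟨Ca, hCa⟩ := haB
  obtain ⟨Cb, hCb⟩ := hbB
  set u : ℕ → ℝ := fun n =>
    ((Real.sqrt (a n) - Real.sqrt (b n))^2 - a n * b n * Real.log n / n - 4)
      * Real.log n / 4 with hudef
  set F : ℕ → ℝ := fun n => expPostMass (a n * Real.log n / n) (b n * Real.log n / n)
      (unifPrior n) (θ n) {θ n} with hFdef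
  set ε : ℕ → ℝ := fun n => (n:ℝ) * rho (a n * Real.log n / n) (b n * Real.log n / n)
      ^ ((n+1)/2) with hεdef
  -- the nuisance term tends to zero
  have hw : Tendsto (fun n : ℕ => a n * b n * (Real.log n)^2 / n) atTop (nhds 0) := by
    have hlim : Tendsto (fun n : ℕ => Real.log (n:ℝ) ^ 2 / (1 * (n:ℝ) + 0)) atTop (nhds 0) :=
      (Real.tendsto_pow_log_div_mul_add_atTop 1 0 2 one_ne_zero).comp
        tendsto_natCast_atTop_atTop
    have hlim2 : Tendsto (fun n : ℕ => (Ca * Cb) * (Real.log (n:ℝ) ^ 2 / (1 * (n:ℝ) + 0)))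
        atTop (nhds 0) := by simpa using hlim.const_mul (Ca * Cb)
    apply squeeze_zero' ?pos ?bnd hlim2
    · filter_upwards [eventually_ge_atTop 2] with n hn
      have h1 := ha0 n hn
      have h2 := hb0 n hn
      have hn0 : (0:ℝ) < n := by positivity
      positivity
    · filter_upwards [eventually_ge_atTop 2] with n hn
      have ha := ha0 n hn
      have hb := hb0 n hn
      have hn0 : (0:ℝ) < n := by positivity
      have hab : a n * b n ≤ Ca * Cb :=
        mul_le_mul (hCa n) (hCb n) hb.le (le_trans ha.le (hCa n))
      have hx : (0:ℝ) ≤ Real.log n ^ 2 / n := by positivity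
      calc a n * b n * Real.log n ^ 2 / n = (a n * b n) * (Real.log n ^ 2 / n) := by ring
        _ ≤ (Ca * Cb) * (Real.log n ^ 2 / n) := mul_le_mul_of_nonneg_right hab hx
        _ = (Ca * Cb) * (Real.log (n:ℝ) ^ 2 / (1 * (n:ℝ) + 0)) := by rw [one_mul, add_zero]
  -- u tends to infinity
  have hu_inf : Tendsto u atTop atTop := by
    have hlow : Tendsto (fun n : ℕ => ((Real.sqrt (a n) - Real.sqrt (b n))^2
        - a n * b n * Real.log n / (2 * n) - 4) * Real.log n / 4 - 1) atTop atTop :=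
      tendsto_atTop_add_const_right _ (-1) (hcond.atTop_div_const (by norm_num))
    apply tendsto_atTop_mono' atTop ?ev hlow
    filter_upwards [eventually_ge_atTop 2,
      (hw.eventually_lt_const (by norm_num : (0:ℝ) < 8))] with n hn hwn
    have hn0 : (n:ℝ) ≠ 0 := by positivity
    have hid : u n = ((Real.sqrt (a n) - Real.sqrt (b n))^2
        - a n * b n * Real.log n / (2 * n) - 4) * Real.log n / 4
        - (a n * b n * (Real.log n)^2 / n) / 8 := by
      rw [hudef]
      field_simp
      ring
    rw [hid]
    linarith
  -- epsilon bounded by exp(-u)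
  have hB4 : ∀ᶠ n in atTop, 4 ≤ (Real.sqrt (a n) - Real.sqrt (b n))^2
      - a n * b n * Real.log n / n := by
    filter_upwards [hu_inf.eventually_gt_atTop 0, eventually_ge_atTop 2] with n hun hn
    have hn1 : (1:ℝ) < n := by exact_mod_cast Nat.lt_of_lt_of_le one_lt_two hn
    have hL : 0 < Real.log n := Real.log_pos hn1
    rw [hudef] at hun
    simp only at hun
    by_contra hcon
    push_neg at hcon
    nlinarith
  have hεb : ∀ᶠ n in atTop, ε n ≤ Real.exp (-(u n)) := by
    filter_upwards [eventually_ge_atTop 2, hB4] with n hn h4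
    have h := eps_le hn (ha0 n hn) (hb0 n hn) (hp n hn) (hq n hn) h4
    simpa only [hεdef, hudef] using h
  have hexp0 : Tendsto (fun n : ℕ => Real.exp (-(u n))) atTop (nhds 0) :=
    Real.tendsto_exp_neg_atTop_nhds_zero.comp hu_inf
  have hεhalf : ∀ᶠ n in atTop, ε n ≤ 1/2 := by
    filter_upwards [hεb, hexp0.eventually_lt_const (by norm_num : (0:ℝ) < 1/2)] with n h1 h2
    exact le_trans h1 h2.le
  -- master bounds
  have hmb : ∀ᶠ n in atTop, (1 - 4 * Real.exp (-(u n)) ≤ F n ∧ F n ≤ 1) := by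
    filter_upwards [eventually_ge_atTop 2, hεhalf, hεb] with n hn hhalf hb
    have hm := master (θ := θ n) hn (hp n hn) (hq n hn) (hθ n hn) hhalf
    simp only [hεdef] at hb
    simp only [hFdef]
    constructor
    · linarith [hm.1]
    · exact hm.2
  have hlowtend : Tendsto (fun n : ℕ => 1 - 4 * Real.exp (-(u n))) atTop (nhds 1) := by
    have hconst : Tendsto (fun _ : ℕ => (1:ℝ)) atTop (nhds 1) := tendsto_const_nhds
    simpa using hconst.sub (hexp0.const_mul 4)
  exact tendsto_of_tendsto_of_tendsto_of_le_of_le' hlowtend tendsto_const_nhds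
    (hmb.mono fun n h => h.1) (hmb.mono fun n h => h.2)
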